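/- arXiv:2601.16840 — 2 statements merged into one kernel-verified Lean document; each statement's English description precedes it below -/
import Mathlib

section
/- Any convex combination σ = q|ψ⟩⟨ψ| + (1−q)|a⟩⟨a|⊗|b⟩⟨b| with 0 < q ≤ 1, where |ψ⟩ is an entangled pure state of a bipartite system and |a⟩⊗|b⟩ is a product pure state, is an entangled (non-separable) state. -/
noncomputable section
open Matrix

/-- Outer product |v⟩⟨v|. -/
def ketbra {α : Type*} (v : α → ℂ) : Matrix α α ℂ :=
  Matrix.of fun x y => v x * star (v y)

/-- Separability across the cut α|β: a nonnegative combination of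
product pure states. -/
def SepState {α β : Type*} [Fintype α] [Fintype β]
    (M : Matrix (α × β) (α × β) ℂ) : Prop :=
  ∃ (n : ℕ) (w : Fin n → ℝ) (u : Fin n → α → ℂ) (v : Fin n → β → ℂ),
    (∀ i, 0 ≤ w i) ∧
      M = ∑ i, ((w i : ℝ) : ℂ) • ketbra (fun x => u i x.1 * v i x.2)

open ComplexConjugate

private lemma shrink1 {γ : Type*} [Fintype γ] (s : Finset γ) (f : γ → ℂ)
    (hf : ∀ p, p ∉ s → f p = 0) : (∑ p : γ, f p) = ∑ p ∈ s, f p :=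
  (Finset.sum_subset s.subset_univ fun p _ hp => hf p hp).symm

private lemma shrink2 {γ : Type*} [Fintype γ] (s : Finset γ) (f : γ → γ → ℂ)
    (hf : ∀ p r, p ∉ s ∨ r ∉ s → f p r = 0) :
    (∑ p : γ, ∑ r : γ, f p r) = ∑ p ∈ s, ∑ r ∈ s, f p r := by
  calc (∑ p : γ, ∑ r : γ, f p r)
      = ∑ p ∈ s, ∑ r : γ, f p r :=
        (Finset.sum_subset s.subset_univ (fun p _ hp =>
          Finset.sum_eq_zero fun r _ => hf p r (Or.inl hp))).symm
    _ = ∑ p ∈ s, ∑ r ∈ s, f p r :=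
        Finset.sum_congr rfl fun p _ =>
          (Finset.sum_subset s.subset_univ (fun r _ hr => hf p r (Or.inr hr))).symm

private lemma F_prod {α β : Type*} [Fintype α] [Fintype β]
    (χ : α × β → ℂ) (u : α → ℂ) (v : β → ℂ) :
    (∑ p : α × β, ∑ r : α × β,
      conj (χ p) * (ketbra (fun x : α × β => u x.1 * v x.2)) (p.1, r.2) (r.1, p.2) * χ r)
    = (∑ p : α × β, conj (χ p) * u p.1 * conj (v p.2)) *
      conj (∑ p : α × β, conj (χ p) * u p.1 * conj (v p.2)) := by
  rw [map_sum, Finset.sum_mul_sum]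
  refine Finset.sum_congr rfl fun p _ => Finset.sum_congr rfl fun r _ => ?_
  simp only [ketbra, Matrix.of_apply, Complex.star_def, _root_.map_mul, Complex.conj_conj]
  ring

private lemma F_two {α β : Type*} [Fintype α] [Fintype β]
    (χ : α × β → ℂ) (c d : ℂ) (M N : Matrix (α × β) (α × β) ℂ) :
    (∑ p : α × β, ∑ r : α × β,
      conj (χ p) * (c • M + d • N) (p.1, r.2) (r.1, p.2) * χ r)
    = c * (∑ p : α × β, ∑ r : α × β, conj (χ p) * M (p.1, r.2) (r.1, p.2) * χ r)
      + d * (∑ p : α × β, ∑ r : α × β, conj (χ p) * N (p.1, r.2) (r.1, p.2) * χ r) := by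
  rw [Finset.mul_sum, Finset.mul_sum, ← Finset.sum_add_distrib]
  refine Finset.sum_congr rfl fun p _ => ?_
  rw [Finset.mul_sum, Finset.mul_sum, ← Finset.sum_add_distrib]
  refine Finset.sum_congr rfl fun r _ => ?_
  simp only [Matrix.add_apply, Matrix.smul_apply, smul_eq_mul]
  ring

private lemma F_sum {α β : Type*} [Fintype α] [Fintype β] {n : ℕ}
    (χ : α × β → ℂ) (c : Fin n → ℂ) (Ms : Fin n → Matrix (α × β) (α × β) ℂ) :
    (∑ p : α × β, ∑ r : α × β,
      conj (χ p) * (∑ i, c i • Ms i) (p.1, r.2) (r.1, p.2) * χ r)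
    = ∑ i, c i * ∑ p : α × β, ∑ r : α × β,
        conj (χ p) * Ms i (p.1, r.2) (r.1, p.2) * χ r := by
  have h1 : ∀ p r : α × β,
      conj (χ p) * (∑ i, c i • Ms i) (p.1, r.2) (r.1, p.2) * χ r
      = ∑ i, c i * (conj (χ p) * Ms i (p.1, r.2) (r.1, p.2) * χ r) := by
    intro p r
    rw [Matrix.sum_apply]
    simp only [Matrix.smul_apply, smul_eq_mul, Finset.mul_sum, Finset.sum_mul]
    exact Finset.sum_congr rfl fun i _ => by ring
  simp only [h1, Finset.mul_sum]
  exact Eq.trans (Finset.sum_congr rfl fun p _ => Finset.sum_comm) Finset.sum_comm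

private lemma exists_minor {α β : Type*} [Fintype α] [Fintype β] (ψ : α × β → ℂ)
    (hψ : ∑ x, Complex.normSq (ψ x) = 1)
    (hent : ¬ ∃ (u : α → ℂ) (v : β → ℂ), ψ = fun x => u x.1 * v x.2) :
    ∃ x1 x2 y1 y2, ψ (x1, y1) * ψ (x2, y2) - ψ (x1, y2) * ψ (x2, y1) ≠ 0 := by
  by_contra h
  push_neg at h
  have hψ0 : ∃ p, ψ p ≠ 0 := by
    by_contra h0
    push_neg at h0
    rw [Finset.sum_congr rfl fun x _ => by rw [h0 x, Complex.normSq_zero]] at hψ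
    simp at hψ
  obtain ⟨⟨x0, y0⟩, h0⟩ := hψ0
  refine hent ⟨fun x => ψ (x, y0), fun y => ψ (x0, y) / ψ (x0, y0), ?_⟩
  funext p
  obtain ⟨x, y⟩ := p
  have h2 := sub_eq_zero.mp (h x x0 y y0)
  dsimp only
  field_simp
  linear_combination h2


set_option maxHeartbeats 2000000 in
/-- any convex combination σ = q|ψ⟩⟨ψ| + (1−q)|a⟩⟨a|⊗|b⟩⟨b|
with 0 < q ≤ 1, |ψ⟩ an entangled pure state and |a⟩⊗|b⟩ a product pure
state, is entangled (non-separable). -/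
theorem stmt5 {α β : Type*} [Fintype α] [Fintype β] (q : ℝ) (hq0 : 0 < q) (hq1 : q ≤ 1)
    (ψ : α × β → ℂ) (a : α → ℂ) (b : β → ℂ)
    (hψ : ∑ x, Complex.normSq (ψ x) = 1)
    (ha : ∑ x, Complex.normSq (a x) = 1)
    (hb : ∑ x, Complex.normSq (b x) = 1)
    (hent : ¬ ∃ (u : α → ℂ) (v : β → ℂ), ψ = fun x => u x.1 * v x.2) :
    ¬ SepState ((q : ℂ) • ketbra ψ +
        ((1 - q : ℝ) : ℂ) • ketbra (fun x : α × β => a x.1 * b x.2)) := by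
  classical
  intro hsep
  obtain ⟨n, w, uu, vv, hw, hM⟩ := hsep
  obtain ⟨x1, x2, y1, y2, hD⟩ := exists_minor ψ hψ hent
  have hx : x1 ≠ x2 := by rintro rfl; exact hD (by ring)
  have hy : y1 ≠ y2 := by rintro rfl; exact hD (by ring)
  -- scalars
  set D : ℂ := ψ (x1, y1) * ψ (x2, y2) - ψ (x1, y2) * ψ (x2, y1) with hDdef
  set u1 : ℂ := ψ (x2, y2) * a x1 - ψ (x1, y2) * a x2 with hu1
  set u2 : ℂ := -(ψ (x2, y1) * a x1) + ψ (x1, y1) * a x2 with hu2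
  set R11 : ℂ := u1 * conj (b y1) with hR11
  set R12 : ℂ := u1 * conj (b y2) with hR12
  set R21 : ℂ := u2 * conj (b y1) with hR21
  set R22 : ℂ := u2 * conj (b y2) with hR22
  set ee : ℂ := R12 - R21 with hee
  set sp : ℂ := R12 + R21 with hsp
  set rr : ℝ := Complex.normSq ee with hrr
  set ss : ℝ := Complex.normSq R11 + Complex.normSq sp / 2 + Complex.normSq R22 with hss
  set dd : ℝ := Complex.normSq D with hdd
  set t : ℝ := q * dd + (1 - q) * ss with ht
  set μ : ℂ := ((1 - q : ℝ) : ℂ) * ee with hμ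
  set A11 : ℂ := μ * conj R11 with hA11
  set A12 : ℂ := μ * conj sp / 2 + (t : ℂ) with hA12
  set A21 : ℂ := μ * conj sp / 2 - (t : ℂ) with hA21
  set A22 : ℂ := μ * conj R22 with hA22
  set c11 : ℂ := conj (A11 * ψ (x2, y2) - A12 * ψ (x2, y1)) with hc11
  set c21 : ℂ := conj (-(A11 * ψ (x1, y2)) + A12 * ψ (x1, y1)) with hc21
  set c12 : ℂ := conj (A21 * ψ (x2, y2) - A22 * ψ (x2, y1)) with hc12
  set c22 : ℂ := conj (-(A21 * ψ (x1, y2)) + A22 * ψ (x1, y1)) with hc22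
  set χ : α × β → ℂ := fun p =>
    if p = (x1, y1) then c11 else if p = (x1, y2) then c12
    else if p = (x2, y1) then c21 else if p = (x2, y2) then c22 else 0 with hχ
  set s : Finset (α × β) := {(x1, y1), (x1, y2), (x2, y1), (x2, y2)} with hs
  have hχ0 : ∀ p : α × β, p ∉ s → χ p = 0 := by
    intro p hp
    simp only [hs, Finset.mem_insert, Finset.mem_singleton, not_or] at hp
    simp [hχ, hp.1, hp.2.1, hp.2.2.1, hp.2.2.2]
  have e11 : χ (x1, y1) = c11 := by simp [hχ]
  have e12 : χ (x1, y2) = c12 := by simp [hχ, Ne.symm hy]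
  have e21 : χ (x2, y1) = c21 := by simp [hχ, Ne.symm hx]
  have e22 : χ (x2, y2) = c22 := by simp [hχ, Ne.symm hx, Ne.symm hy]
  have hmem1 : ((x1, y1) : α × β) ∉ ({(x1, y2), (x2, y1), (x2, y2)} : Finset (α × β)) := by
    simp [hx, hy]
  have hmem2 : ((x1, y2) : α × β) ∉ ({(x2, y1), (x2, y2)} : Finset (α × β)) := by
    simp [hx]
  have hmem3 : ((x2, y1) : α × β) ∉ ({((x2 : α), (y2 : β))} : Finset (α × β)) := by
    simp [hy]
  have hFψ : (∑ p : α × β, ∑ r : α × β,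
      conj (χ p) * (ketbra ψ) (p.1, r.2) (r.1, p.2) * χ r)
      = ((dd : ℝ) : ℂ) * (A11 * conj A11 + A12 * conj A21 + A21 * conj A12 + A22 * conj A22) := by
    rw [shrink2 s (fun p r => conj (χ p) * (ketbra ψ) (p.1, r.2) (r.1, p.2) * χ r)
      (by intro p r hpr
          rcases hpr with hp | hr
          · simp [hχ0 p hp]
          · simp [hχ0 r hr])]
    simp only [hs, Finset.sum_insert hmem1, Finset.sum_insert hmem2, Finset.sum_insert hmem3,
      Finset.sum_singleton]
    simp only [e11, e12, e21, e22, ketbra, Matrix.of_apply, Complex.star_def]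
    simp only [hc11, hc12, hc21, hc22, Complex.conj_conj]
    rw [hdd, hDdef, ← Complex.mul_conj]
    simp only [_root_.map_mul, map_sub, map_add, map_neg, Complex.conj_conj]
    ring
  have hLab : (∑ p : α × β, conj (χ p) * a p.1 * conj (b p.2))
      = -(ee * ((q * dd : ℝ) : ℂ)) := by
    rw [shrink1 s (fun p => conj (χ p) * a p.1 * conj (b p.2))
      (fun p hp => by simp [hχ0 p hp])]
    simp only [hs, Finset.sum_insert hmem1, Finset.sum_insert hmem2, Finset.sum_insert hmem3,
      Finset.sum_singleton]
    simp only [e11, e12, e21, e22]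
    simp only [hc11, hc12, hc21, hc22, hA11, hA12, hA21, hA22, hμ, hee, hsp, hR11, hR12, hR21,
      hR22, hu1, hu2, ht, hss, hrr, hdd, hDdef, Complex.conj_conj]
    push_cast
    simp only [← Complex.mul_conj]
    simp only [_root_.map_mul, map_sub, map_add, map_neg, map_div₀, map_ofNat, _root_.map_one,
      Complex.conj_conj, Complex.conj_ofReal]
    ring
  have hGA : A11 * conj A11 + A12 * conj A21 + A21 * conj A12 + A22 * conj A22
      = ((rr * (1 - q) ^ 2 * ss - 2 * t ^ 2 : ℝ) : ℂ) := by
    simp only [hA11, hA12, hA21, hA22, hμ, hss, hrr]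
    push_cast
    simp only [← Complex.mul_conj]
    simp only [_root_.map_mul, map_sub, map_add, map_neg, map_div₀, map_ofNat, _root_.map_one,
      Complex.conj_conj, Complex.conj_ofReal]
    ring
  have hq1' : 0 ≤ 1 - q := sub_nonneg.2 hq1
  have hδpos : 0 < dd := by rw [hdd]; exact Complex.normSq_pos.mpr hD
  have hsspos : 0 ≤ ss := by
    rw [hss]
    have := Complex.normSq_nonneg R11
    have := Complex.normSq_nonneg sp
    have := Complex.normSq_nonneg R22
    linarith
  have hrrpos : 0 ≤ rr := by rw [hrr]; exact Complex.normSq_nonneg ee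
  have h12 : R12 * R21 = R11 * R22 := by rw [hR11, hR12, hR21, hR22]; ring
  have habs : ‖R12 * conj R21‖ = ‖R11‖ * ‖R22‖ := by
    rw [norm_mul, Complex.norm_conj, ← norm_mul, h12, norm_mul]
  have hre : -(‖R11‖ * ‖R22‖) ≤ (R12 * conj R21).re :=
    (abs_le.mp (habs ▸ Complex.abs_re_le_norm (R12 * conj R21))).1
  have h2ss : 2 * ss - rr = 2 * Complex.normSq R11 + 2 * Complex.normSq R22
      + 4 * (R12 * conj R21).re := by
    rw [hss, hrr, hsp, hee]
    simp only [Complex.normSq_apply, Complex.mul_re, Complex.mul_im, Complex.conj_re,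
      Complex.conj_im, Complex.sub_re, Complex.sub_im, Complex.add_re, Complex.add_im]
    ring
  have hkey : rr ≤ 2 * ss := by
    nlinarith [sq_nonneg (‖R11‖ - ‖R22‖), Complex.sq_norm R11,
      Complex.sq_norm R22, hre, h2ss]
  have hT : 0 < t := by rw [ht]; nlinarith
  have h4 : rr * (1 - q) ≤ 2 * t - 2 * (q * dd) := by
    rw [ht]
    nlinarith [mul_le_mul_of_nonneg_right hkey hq1']
  have h3 : rr * (1 - q) * t - 2 * t ^ 2 < 0 := by
    nlinarith [mul_pos (mul_pos hq0 hδpos) hT, mul_le_mul_of_nonneg_right h4 hT.le]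
  set E : ℝ := q * dd * (rr * (1 - q) ^ 2 * ss - 2 * t ^ 2) + (1 - q) * (rr * (q * dd) ^ 2)
    with hE
  have hEneg : E < 0 := by
    have hfac : E = q * dd * (rr * (1 - q) * t - 2 * t ^ 2) := by rw [hE, ht]; ring
    rw [hfac]
    exact mul_neg_of_pos_of_neg (mul_pos hq0 hδpos) h3
  have hσval : (∑ p : α × β, ∑ r : α × β, conj (χ p) *
      ((q : ℂ) • ketbra ψ + ((1 - q : ℝ) : ℂ) • ketbra (fun x : α × β => a x.1 * b x.2))
        (p.1, r.2) (r.1, p.2) * χ r) = ((E : ℝ) : ℂ) := by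
    rw [F_two, hFψ, hGA, F_prod χ a b, hLab, hE]
    push_cast
    simp only [hrr]
    simp only [← Complex.mul_conj]
    simp only [map_neg, _root_.map_mul, Complex.conj_ofReal, Complex.conj_conj]
    push_cast
    ring
  have hsep' : (∑ p : α × β, ∑ r : α × β, conj (χ p) *
      ((q : ℂ) • ketbra ψ + ((1 - q : ℝ) : ℂ) • ketbra (fun x : α × β => a x.1 * b x.2))
        (p.1, r.2) (r.1, p.2) * χ r)
      = ((∑ i, w i * Complex.normSq (∑ p : α × β, conj (χ p) * uu i p.1 * conj (vv i p.2)) : ℝ) : ℂ) := by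
    rw [hM, F_sum]
    simp only [F_prod, Complex.mul_conj]
    push_cast
    ring
  have hEq : (∑ i, w i * Complex.normSq
      (∑ p : α × β, conj (χ p) * uu i p.1 * conj (vv i p.2))) = E :=
    Complex.ofReal_inj.mp (hsep'.symm.trans hσval)
  have hnn : 0 ≤ ∑ i, w i * Complex.normSq
      (∑ p : α × β, conj (χ p) * uu i p.1 * conj (vv i p.2)) :=
    Finset.sum_nonneg fun i _ => mul_nonneg (hw i) (Complex.normSq_nonneg _)
  rw [hEq] at hnn
  linarith
end
end

section
/- For 0 < p < 1 and |ψ⟩ = Σ_{i=0}^{2} a_i |ii⟩ with all a_i ≠ 0, the three-qutrit state ρ = p|ψ⟩⟨ψ|⊗|0⟩⟨0| + (1−p)|0⟩⟨0|⊗|ψ⟩⟨ψ| has non-positive partial transpose across every one of the three bipartitions A|BC, B|AC, AB|C, and hence is entangled across every bipartition. -/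
noncomputable section
open Matrix
open scoped ComplexOrder

/-- Index type for three qutrits A, B, C. -/
abbrev T3 := Fin 3 × Fin 3 × Fin 3

/-- |ψ⟩_{AB} ⊗ |0⟩_C with |ψ⟩ = Σ aᵢ|ii⟩. -/
def u₁ (a : Fin 3 → ℂ) : T3 → ℂ :=
  fun x => (if x.1 = x.2.1 then a x.1 else 0) * (if x.2.2 = 0 then 1 else 0)

/-- |0⟩_A ⊗ |ψ⟩_{BC}. -/
def u₂ (a : Fin 3 → ℂ) : T3 → ℂ :=
  fun x => (if x.1 = 0 then 1 else 0) * (if x.2.1 = x.2.2 then a x.2.1 else 0)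

/-- ρ = p|ψ⟩⟨ψ|⊗|0⟩⟨0| + (1−p)|0⟩⟨0|⊗|ψ⟩⟨ψ|. -/
def ρ (p : ℝ) (a : Fin 3 → ℂ) : Matrix T3 T3 ℂ :=
  (p : ℂ) • ketbra (u₁ a) + ((1 - p : ℝ) : ℂ) • ketbra (u₂ a)

/-- Partial transpose on A. -/
def ptA (M : Matrix T3 T3 ℂ) : Matrix T3 T3 ℂ :=
  Matrix.of fun x y => M (y.1, x.2) (x.1, y.2)

/-- Partial transpose on B. -/
def ptB (M : Matrix T3 T3 ℂ) : Matrix T3 T3 ℂ :=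
  Matrix.of fun x y => M (x.1, y.2.1, x.2.2) (y.1, x.2.1, y.2.2)

/-- Partial transpose on C. -/
def ptC (M : Matrix T3 T3 ℂ) : Matrix T3 T3 ℂ :=
  Matrix.of fun x y => M (x.1, x.2.1, y.2.2) (y.1, y.2.1, x.2.2)

/-- ρ reindexed for the B|AC cut. -/
def ρB (p : ℝ) (a : Fin 3 → ℂ) :
    Matrix (Fin 3 × (Fin 3 × Fin 3)) (Fin 3 × (Fin 3 × Fin 3)) ℂ :=
  Matrix.of fun x y => ρ p a (x.2.1, x.1, x.2.2) (y.2.1, y.1, y.2.2)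

/-- ρ reindexed for the AB|C cut. -/
def ρAB (p : ℝ) (a : Fin 3 → ℂ) :
    Matrix ((Fin 3 × Fin 3) × Fin 3) ((Fin 3 × Fin 3) × Fin 3) ℂ :=
  Matrix.of fun x y => ρ p a (x.1.1, x.1.2, x.2) (y.1.1, y.1.2, y.2)

/-! ### Auxiliary lemmas -/

lemma ketbra_smul_psd {α : Type*} [Fintype α] {w : ℝ} (hw : 0 ≤ w) (v : α → ℂ) :
    ((w : ℂ) • ketbra v).PosSemidef := by
  refine Matrix.PosSemidef.of_dotProduct_mulVec_nonneg ?_ ?_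
  · ext i j
    simp [ketbra, conjTranspose_apply, Complex.conj_ofReal, mul_comm]
  · intro x
    have h : star x ⬝ᵥ ((w:ℂ) • ketbra v) *ᵥ x
        = (w:ℂ) * (star (∑ j, star (v j) * x j) * (∑ j, star (v j) * x j)) := by
      simp only [ketbra, dotProduct, mulVec, Matrix.smul_apply, Matrix.of_apply, smul_eq_mul,
        Pi.star_apply, star_sum, Finset.mul_sum, Finset.sum_mul]
      rw [Finset.sum_comm]
      congr 1; ext i; congr 1; ext j
      simp only [star_mul', star_star]
      ring
    rw [h]
    exact mul_nonneg (by exact_mod_cast hw) (star_mul_self_nonneg _)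

lemma psd_sum {α : Type*} [Fintype α] {n : ℕ} (f : Fin n → Matrix α α ℂ)
    (h : ∀ i, (f i).PosSemidef) : (∑ i, f i).PosSemidef := by
  induction n with
  | zero => simpa using Matrix.PosSemidef.zero
  | succ n ih =>
    rw [Fin.sum_univ_succ]
    exact (h 0).add (ih _ fun i => h i.succ)

/-- Separability implies the partial transpose across the cut is PSD. -/
lemma sep_pt {α β : Type*} [Fintype α] [Fintype β]
    {M : Matrix (α × β) (α × β) ℂ} (h : SepState M) :
    (Matrix.of fun x y : α × β => M (y.1, x.2) (x.1, y.2)).PosSemidef := by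
  obtain ⟨n, w, u, v, hw, hM⟩ := h
  have he : (Matrix.of fun x y : α × β => M (y.1, x.2) (x.1, y.2)) =
      ∑ i, ((w i : ℝ) : ℂ) • ketbra (fun x : α × β => star (u i x.1) * v i x.2) := by
    subst hM
    ext x y
    simp only [Matrix.of_apply, Matrix.sum_apply, Matrix.smul_apply, ketbra, smul_eq_mul]
    congr 1; ext i
    simp only [star_mul', star_star]
    ring
  rw [he]
  exact psd_sum _ fun i => ketbra_smul_psd (hw i) _

lemma star_single' {α : Type*} [DecidableEq α] (i : α) :
    star (Pi.single i 1 : α → ℂ) = Pi.single i 1 := by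
  ext t; simp [Pi.single_apply, apply_ite (star : ℂ → ℂ)]

lemma quad_two {α : Type*} [Fintype α] [DecidableEq α] (M : Matrix α α ℂ)
    (i j : α) (c d : ℂ) :
    star (c • (Pi.single i 1 : α → ℂ) + d • (Pi.single j 1 : α → ℂ)) ⬝ᵥ
      M *ᵥ (c • (Pi.single i 1 : α → ℂ) + d • (Pi.single j 1 : α → ℂ))
    = star c * M i i * c + star c * M i j * d + star d * M j i * c
        + star d * M j j * d := by
  simp [Matrix.mulVec_add, Matrix.mulVec_smul, dotProduct_add, add_dotProduct,
    smul_dotProduct, dotProduct_smul, Matrix.mulVec_single, star_add, star_smul,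
    single_dotProduct, smul_eq_mul, star_single']
  ring

lemma not_psd_of_witness {α : Type*} [Fintype α] [DecidableEq α]
    (M : Matrix α α ℂ) (i j : α) (c d : ℂ) (r : ℝ) (hr : r < 0)
    (h : star c * M i i * c + star c * M i j * d + star d * M j i * c
        + star d * M j j * d = (r : ℂ)) : ¬ M.PosSemidef := by
  intro hpsd
  have hq := hpsd.dotProduct_mulVec_nonneg (c • (Pi.single i 1 : α → ℂ) + d • (Pi.single j 1 : α → ℂ))
  rw [quad_two, h] at hq
  exact absurd (Complex.zero_le_real.mp hq) (not_le.mpr hr)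

/-- for 0 < p < 1 and all aᵢ ≠ 0, ρ has non-positive partial
transpose across each of A|BC, B|AC, AB|C, and hence is entangled across
every bipartition. -/
theorem stmt7 (p : ℝ) (hp0 : 0 < p) (hp1 : p < 1) (a : Fin 3 → ℂ)
    (ha : ∀ i, a i ≠ 0) (hnorm : ∑ i, Complex.normSq (a i) = 1) :
    ¬ (ptA (ρ p a)).PosSemidef ∧ ¬ (ptB (ρ p a)).PosSemidef ∧
    ¬ (ptC (ρ p a)).PosSemidef ∧
    ¬ SepState (ρ p a) ∧ ¬ SepState (ρB p a) ∧ ¬ SepState (ρAB p a) := by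
  have hn0 : 0 < Complex.normSq (a 0) := Complex.normSq_pos.mpr (ha 0)
  have hn1 : 0 < Complex.normSq (a 1) := Complex.normSq_pos.mpr (ha 1)
  have hrp : -(2 * p * (Complex.normSq (a 0) * Complex.normSq (a 1))) < 0 := by
    have := mul_pos (mul_pos hp0 hn0) hn1; nlinarith
  have hrq : -(2 * (1 - p) * (Complex.normSq (a 0) * Complex.normSq (a 1))) < 0 := by
    have := mul_pos (mul_pos (sub_pos.mpr hp1) hn0) hn1; nlinarith
  have hA : ¬ (ptA (ρ p a)).PosSemidef := by
    apply not_psd_of_witness _ ((0:Fin 3),(1:Fin 3),(0:Fin 3)) ((1:Fin 3),(0:Fin 3),(0:Fin 3))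
      1 (-(a 0 * star (a 1)))
      (-(2 * p * (Complex.normSq (a 0) * Complex.normSq (a 1)))) hrp
    simp only [ptA, ρ, ketbra, u₁, u₂, Matrix.of_apply, Matrix.add_apply, Matrix.smul_apply, smul_eq_mul,
      Complex.normSq_eq_conj_mul_self, Complex.ofReal_neg, Complex.ofReal_mul,
      Complex.ofReal_ofNat, Complex.star_def, map_neg, _root_.map_mul, Complex.conj_conj,
      _root_.map_one, Complex.ofReal_sub, Complex.ofReal_one]
    norm_num
    ring
  have hB : ¬ (ptB (ρ p a)).PosSemidef := by
    apply not_psd_of_witness _ ((0:Fin 3),(1:Fin 3),(0:Fin 3)) ((1:Fin 3),(0:Fin 3),(0:Fin 3))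
      1 (-(star (a 0) * a 1))
      (-(2 * p * (Complex.normSq (a 0) * Complex.normSq (a 1)))) hrp
    simp only [ptB, ρ, ketbra, u₁, u₂, Matrix.of_apply, Matrix.add_apply, Matrix.smul_apply, smul_eq_mul,
      Complex.normSq_eq_conj_mul_self, Complex.ofReal_neg, Complex.ofReal_mul,
      Complex.ofReal_ofNat, Complex.star_def, map_neg, _root_.map_mul, Complex.conj_conj,
      _root_.map_one, Complex.ofReal_sub, Complex.ofReal_one]
    norm_num
    ring
  have hC : ¬ (ptC (ρ p a)).PosSemidef := by
    apply not_psd_of_witness _ ((0:Fin 3),(0:Fin 3),(1:Fin 3)) ((0:Fin 3),(1:Fin 3),(0:Fin 3))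
      1 (-(star (a 0) * a 1))
      (-(2 * (1 - p) * (Complex.normSq (a 0) * Complex.normSq (a 1)))) hrq
    simp only [ptC, ρ, ketbra, u₁, u₂, Matrix.of_apply, Matrix.add_apply, Matrix.smul_apply, smul_eq_mul,
      Complex.normSq_eq_conj_mul_self, Complex.ofReal_neg, Complex.ofReal_mul,
      Complex.ofReal_ofNat, Complex.star_def, map_neg, _root_.map_mul, Complex.conj_conj,
      _root_.map_one, Complex.ofReal_sub, Complex.ofReal_one]
    norm_num
    ring
  refine ⟨hA, hB, hC, fun h => hA (sep_pt h), fun h => ?_, fun h => ?_⟩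
  · have := sep_pt h
    revert this
    apply not_psd_of_witness _ ((1:Fin 3),((0:Fin 3),(0:Fin 3))) ((0:Fin 3),((1:Fin 3),(0:Fin 3)))
      1 (-(star (a 0) * a 1))
      (-(2 * p * (Complex.normSq (a 0) * Complex.normSq (a 1)))) hrp
    simp only [ρB, ρ, ketbra, u₁, u₂, Matrix.of_apply, Matrix.add_apply, Matrix.smul_apply, smul_eq_mul,
      Complex.normSq_eq_conj_mul_self, Complex.ofReal_neg, Complex.ofReal_mul,
      Complex.ofReal_ofNat, Complex.star_def, map_neg, _root_.map_mul, Complex.conj_conj,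
      _root_.map_one, Complex.ofReal_sub, Complex.ofReal_one]
    norm_num
    ring
  · have := sep_pt h
    revert this
    apply not_psd_of_witness _ (((0:Fin 3),(0:Fin 3)),(1:Fin 3)) (((0:Fin 3),(1:Fin 3)),(0:Fin 3))
      1 (-(a 0 * star (a 1)))
      (-(2 * (1 - p) * (Complex.normSq (a 0) * Complex.normSq (a 1)))) hrq
    simp only [ρAB, ρ, ketbra, u₁, u₂, Matrix.of_apply, Matrix.add_apply, Matrix.smul_apply, smul_eq_mul,
      Complex.normSq_eq_conj_mul_self, Complex.ofReal_neg, Complex.ofReal_mul,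
      Complex.ofReal_ofNat, Complex.star_def, map_neg, _root_.map_mul, Complex.conj_conj,
      _root_.map_one, Complex.ofReal_sub, Complex.ofReal_one]
    norm_num
    ring
end
end
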